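/- Let J₁ ∈ C(ℝ) ∩ L^∞(ℝ) be even, nonnegative, with J₁(0) > 0 and ∫_ℝ J₁ = 1. For 0 < L₁ < L₂ define ψ(x) = min{1, (L₂ - |x|)/L₁}. Then for any ε > 0 there exists L_ε > 0 (depending only on J₁ and ε) such that whenever L₁ ≥ L_ε and L₂ - L₁ ≥ L_ε, one has ∫_0^{L₂} J₁(x - y) ψ(y) dy ≥ (1 - ε) ψ(x) for all x ∈ [L_ε, L₂]. -/

import Mathlib

open MeasureTheory intervalIntegral

/-- Interval integral of a continuous odd function over a symmetric interval vanishes. -/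
lemma stmt19_odd_integral (f : ℝ → ℝ) (hf : Continuous f) (hodd : ∀ t, f (-t) = - f t)
    (R : ℝ) : (∫ t in (-R)..R, f t) = 0 := by
  have h1 : (∫ t in (-R)..R, f (-t)) = ∫ t in (-R)..R, f t := by
    have := intervalIntegral.integral_comp_neg (a := -R) (b := R) f
    simpa using this
  have h2 : (∫ t in (-R)..R, f (-t)) = - ∫ t in (-R)..R, f t := by
    simp only [hodd]
    exact intervalIntegral.integral_neg
  linarith [h1, h2.symm.trans h1]

/-- Nonlocal sub-eigenfunction estimate for the trapezoid `ψ(x) = min{1, (L₂-|x|)/L₁}`: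
for any `ε > 0` there is `L_ε > 0` (depending only on `J₁` and `ε`) such that whenever
`L₁ ≥ L_ε` and `L₂ - L₁ ≥ L_ε`, one has
`∫_0^{L₂} J₁(x-y) ψ(y) dy ≥ (1-ε) ψ(x)` for all `x ∈ [L_ε, L₂]`. -/
theorem stmt19 (J₁ : ℝ → ℝ) (hc : Continuous J₁) (hb : ∃ M, ∀ x, |J₁ x| ≤ M)
    (heven : ∀ x, J₁ (-x) = J₁ x) (hnn : ∀ x, 0 ≤ J₁ x) (h0 : 0 < J₁ 0)
    (hint : (∫ x : ℝ, J₁ x) = 1)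
    (ε : ℝ) (hε : 0 < ε) :
    ∃ Lε > (0:ℝ), ∀ L₁ L₂ : ℝ, 0 < L₁ → L₁ < L₂ → Lε ≤ L₁ → Lε ≤ L₂ - L₁ →
      ∀ x ∈ Set.Icc Lε L₂,
        (1 - ε) * min 1 ((L₂ - |x|) / L₁) ≤
          ∫ y in (0:ℝ)..L₂, J₁ (x - y) * min 1 ((L₂ - |y|) / L₁) := by
  -- J₁ is integrable
  have hInt : Integrable J₁ := by
    by_contra h
    rw [MeasureTheory.integral_undef h] at hint
    norm_num at hint
  -- trivial case ε ≥ 1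
  rcases le_or_gt 1 ε with hε1 | hε1
  · refine ⟨1, one_pos, ?_⟩
    intro L₁ L₂ hL₁ hlt hL1 hL2 x hx
    have hψx : (0:ℝ) ≤ min 1 ((L₂ - |x|) / L₁) := by
      refine le_min one_pos.le (div_nonneg ?_ hL₁.le)
      rw [abs_of_nonneg (by linarith [hx.1] : (0:ℝ) ≤ x)]
      linarith [hx.2]
    have h1 : (1 - ε) * min 1 ((L₂ - |x|) / L₁) ≤ 0 :=
      mul_nonpos_of_nonpos_of_nonneg (by linarith) hψx
    refine h1.trans (intervalIntegral.integral_nonneg (by linarith [hx.1, hx.2]) ?_)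
    intro y hy
    refine mul_nonneg (hnn _) (le_min one_pos.le (div_nonneg ?_ hL₁.le))
    rw [abs_of_nonneg hy.1]
    linarith [hy.2]
  -- main case: ε < 1
  set δ : ℝ := ε / 2 with hδdef
  have hδpos : 0 < δ := by positivity
  have hδhalf : δ < 1/2 := by simp only [hδdef]; linarith
  -- choose R with mass ≥ 1 - δ
  obtain ⟨R, hR1, hm⟩ : ∃ R : ℝ, 1 ≤ R ∧ 1 - δ ≤ ∫ t in (-R)..R, J₁ t := by
    have ht : Filter.Tendsto (fun i : ℝ => ∫ t in (-i)..i, J₁ t)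
        Filter.atTop (nhds (∫ x : ℝ, J₁ x)) :=
      MeasureTheory.intervalIntegral_tendsto_integral hInt
        Filter.tendsto_neg_atTop_atBot Filter.tendsto_id
    rw [hint] at ht
    have hev : ∀ᶠ i : ℝ in Filter.atTop, 1 - δ ≤ ∫ t in (-i)..i, J₁ t :=
      ht.eventually (eventually_ge_nhds (by linarith))
    obtain ⟨R, hR⟩ := ((Filter.eventually_ge_atTop (1:ℝ)).and hev).exists
    exact ⟨R, hR.1, hR.2⟩
  have hRpos : (0:ℝ) < R := by linarith
  refine ⟨max R (2 * R / δ), lt_max_of_lt_left hRpos, ?_⟩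
  intro L₁ L₂ hL₁pos hlt hL1 hL2 x hx
  have hRL1 : R ≤ L₁ := le_trans (le_max_left _ _) hL1
  have h2RL1 : 2 * R / δ ≤ L₁ := le_trans (le_max_right _ _) hL1
  have h2R : 2 * R ≤ δ * L₁ := by
    rw [div_le_iff₀ hδpos] at h2RL1; linarith
  have h4R : 4 * R ≤ L₁ := by nlinarith
  have hxR : R ≤ x := le_trans (le_max_left _ _) hx.1
  have hxL2 : x ≤ L₂ := hx.2
  have hxpos : 0 < x := lt_of_lt_of_le hRpos hxR
  have hL21 : max R (2 * R / δ) ≤ L₂ - L₁ := hL2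
  have hL2L1R : R ≤ L₂ - L₁ := le_trans (le_max_left _ _) hL21
  -- ψ and the integrand
  set ψ : ℝ → ℝ := fun y => min 1 ((L₂ - |y|) / L₁) with hψdef
  set g : ℝ → ℝ := fun y => J₁ (x - y) * ψ y with hgdef
  have hψcont : Continuous ψ :=
    continuous_const.min ((continuous_const.sub continuous_abs).div_const _)
  have hgcont : Continuous g :=
    (hc.comp (continuous_const.sub continuous_id)).mul hψcont
  have hgint : ∀ a b : ℝ, IntervalIntegrable g volume a b :=
    fun a b => hgcont.intervalIntegrable a b
  -- ψ is nonneg on [0, L₂]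
  have hψnn : ∀ y, 0 ≤ y → y ≤ L₂ → 0 ≤ ψ y := by
    intro y hy1 hy2
    refine le_min one_pos.le (div_nonneg ?_ hL₁pos.le)
    rw [abs_of_nonneg hy1]; linarith
  have hgnn : ∀ y ∈ Set.Icc (0:ℝ) L₂, 0 ≤ g y :=
    fun y hy => mul_nonneg (hnn _) (hψnn y hy.1 hy.2)
  -- ψ y = (L₂ - y)/L₁ for y ∈ [L₂ - L₁, ∞), y ≥ 0
  have hψlin : ∀ y, 0 ≤ y → L₂ - L₁ ≤ y → ψ y = (L₂ - y) / L₁ := by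
    intro y hy1 hy2
    simp only [hψdef, abs_of_nonneg hy1]
    exact min_eq_right (by rw [div_le_one hL₁pos]; linarith)
  -- restriction of the integral to a subinterval [a, b] ⊆ [0, L₂]
  have hrestrict : ∀ a b : ℝ, 0 ≤ a → a ≤ b → b ≤ L₂ →
      (∫ y in a..b, g y) ≤ ∫ y in (0:ℝ)..L₂, g y := by
    intro a b ha hab hb
    have h1 : (∫ y in (0:ℝ)..a, g y) + (∫ y in a..b, g y) + (∫ y in b..L₂, g y)
        = ∫ y in (0:ℝ)..L₂, g y := by
      rw [intervalIntegral.integral_add_adjacent_intervals (hgint 0 a) (hgint a b)]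
      exact intervalIntegral.integral_add_adjacent_intervals (hgint 0 b) (hgint b L₂)
    have h2 : 0 ≤ ∫ y in (0:ℝ)..a, g y :=
      intervalIntegral.integral_nonneg ha
        (fun u hu => hgnn u ⟨hu.1, le_trans hu.2 (le_trans hab hb)⟩)
    have h3 : 0 ≤ ∫ y in b..L₂, g y :=
      intervalIntegral.integral_nonneg hb
        (fun u hu => hgnn u ⟨le_trans (le_trans ha hab) hu.1, hu.2⟩)
    linarith
  set m : ℝ := ∫ t in (-R)..R, J₁ t with hmdef
  have hm1 : m ≤ 1 := by
    rw [hmdef, ← hint]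
    rw [intervalIntegral.integral_of_le (by linarith : -R ≤ R)]
    exact MeasureTheory.setIntegral_le_integral hInt
      (Filter.Eventually.of_forall (fun t => hnn t))
  -- the kernel mass over a window of radius R around x
  have hker : ∀ c : ℝ, (∫ y in (x - R)..(x + R), J₁ (x - y) * c) = m * c := by
    intro c
    rw [intervalIntegral.integral_mul_const]
    congr 1
    have := intervalIntegral.integral_comp_sub_left (a := x - R) (b := x + R) J₁ x
    simp [hmdef]
  rcases le_or_gt x (L₂ - L₁ + R) with hcase | hcase
  · -- Case 1: x ≤ L₂ - L₁ + R; here ψ ≥ 1 - δ on the window and ψ x ≤ 1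
    have hxR2 : x + R ≤ L₂ := by linarith
    have hlow : ∀ y ∈ Set.Icc (x - R) (x + R), J₁ (x - y) * (1 - δ) ≤ g y := by
      intro y hy
      have hy0 : 0 ≤ y := by linarith [hy.1, hxR]
      have hψy : 1 - δ ≤ ψ y := by
        refine le_min (by linarith) ?_
        rw [abs_of_nonneg hy0, le_div_iff₀ hL₁pos]
        have : y ≤ L₂ - L₁ + 2 * R := by linarith [hy.2]
        nlinarith
      exact mul_le_mul_of_nonneg_left hψy (hnn _)
    have h1 : m * (1 - δ) ≤ ∫ y in (x - R)..(x + R), g y := by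
      rw [← hker (1 - δ)]
      exact intervalIntegral.integral_mono_on (by linarith)
        (((hc.comp (continuous_const.sub continuous_id)).mul
          continuous_const).intervalIntegrable _ _)
        (hgint _ _) hlow
    have h2 : (∫ y in (x - R)..(x + R), g y) ≤ ∫ y in (0:ℝ)..L₂, g y :=
      hrestrict _ _ (by linarith) (by linarith) hxR2
    have hψx1 : ψ x ≤ 1 := min_le_left _ _
    have hψxnn : 0 ≤ ψ x := hψnn x hxpos.le hxL2
    have key : (1 - ε) * ψ x ≤ m * (1 - δ) := by
      have h5 : 1 - ε ≤ m * (1 - δ) := by nlinarith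
      nlinarith
    calc (1 - ε) * ψ x ≤ m * (1 - δ) := key
      _ ≤ _ := le_trans h1 h2
  · -- Case 2: x > L₂ - L₁ + R; window lies in the linear regime
    have hwin : ∀ y ∈ Set.Icc (x - R) (x + R), ψ y = (L₂ - y) / L₁ := by
      intro y hy
      exact hψlin y (by linarith [hy.1, hL2L1R,
        (le_trans (le_max_left _ _) hL21 : R ≤ L₂ - L₁)]) (by linarith [hy.1])
    -- the integral over the window computed exactly
    have hcomp : (∫ y in (x - R)..(x + R), g y) = m * ((L₂ - x) / L₁) := by
      have he : (∫ y in (x - R)..(x + R), g y)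
          = ∫ y in (x - R)..(x + R), J₁ (x - y) * ((L₂ - x) / L₁)
              + J₁ (x - y) * ((x - y) / L₁) := by
        refine intervalIntegral.integral_congr ?_
        intro y hy
        rw [Set.uIcc_of_le (by linarith : x - R ≤ x + R)] at hy
        rw [hgdef]
        simp only
        rw [hwin y hy]
        ring
      have hcont1 : Continuous (fun y : ℝ => J₁ (x - y) * ((L₂ - x) / L₁)) := by
        fun_prop
      have hcont2 : Continuous (fun y : ℝ => J₁ (x - y) * ((x - y) / L₁)) := by
        fun_prop
      rw [he, intervalIntegral.integral_add
        (hcont1.intervalIntegrable _ _) (hcont2.intervalIntegrable _ _)]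
      rw [hker ((L₂ - x) / L₁)]
      have hodd : (∫ y in (x - R)..(x + R), J₁ (x - y) * ((x - y) / L₁)) = 0 := by
        have hsub := intervalIntegral.integral_comp_sub_left (a := x - R) (b := x + R)
          (fun t => J₁ t * (t / L₁)) x
        rw [show (∫ y in (x - R)..(x + R), J₁ (x - y) * ((x - y) / L₁))
            = ∫ y in (x - R)..(x + R), (fun t => J₁ t * (t / L₁)) (x - y) from rfl, hsub]
        have : x - (x + R) = -R := by ring
        rw [this, show x - (x - R) = R by ring]
        refine stmt19_odd_integral _ (hc.mul (continuous_id.div_const _)) ?_ R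
        intro t
        simp only [id_eq, Pi.mul_apply, heven t]
        ring
      rw [hodd, add_zero]
    -- bound the truncated integral from below
    have hlow2 : m * ((L₂ - x) / L₁) ≤ ∫ y in (0:ℝ)..L₂, g y := by
      rcases le_total (x + R) L₂ with hle | hle
      · rw [← hcomp]
        exact hrestrict _ _ (by linarith) (by linarith) hle
      · have h1 : (∫ y in (x - R)..L₂, g y) ≤ ∫ y in (0:ℝ)..L₂, g y :=
          hrestrict _ _ (by linarith) (by linarith) le_rfl
        have h2 : (∫ y in (x - R)..L₂, g y) + (∫ y in L₂..(x + R), g y)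
            = ∫ y in (x - R)..(x + R), g y :=
          intervalIntegral.integral_add_adjacent_intervals (hgint _ _) (hgint _ _)
        have h3 : (∫ y in L₂..(x + R), g y) ≤ 0 := by
          have : 0 ≤ ∫ y in L₂..(x + R), -g y := by
            refine intervalIntegral.integral_nonneg hle ?_
            intro u hu
            have hu0 : 0 ≤ u := by linarith [hu.1]
            have : ψ u ≤ 0 := by
              refine le_trans (min_le_right _ _) ?_
              rw [abs_of_nonneg hu0]
              apply div_nonpos_of_nonpos_of_nonneg _ hL₁pos.le
              linarith [hu.1]
            have : g u ≤ 0 := mul_nonpos_of_nonneg_of_nonpos (hnn _) this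
            linarith
          rw [intervalIntegral.integral_neg] at this
          linarith
        rw [← hcomp]
        linarith
    have hψx : ψ x = (L₂ - x) / L₁ := hψlin x hxpos.le (by linarith)
    have hψxnn : 0 ≤ (L₂ - x) / L₁ := div_nonneg (by linarith) hL₁pos.le
    have key : (1 - ε) * ψ x ≤ m * ((L₂ - x) / L₁) := by
      rw [hψx]
      apply mul_le_mul_of_nonneg_right _ hψxnn
      linarith
    exact le_trans key hlow2
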